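/- Let n₀ ≥ 1, β ≥ 1, n₁ = β·n₀ + r with 0 < r < n₀, and K ≥ 1. Let T : Fin n₁ → Fin n₀ be surjective with every fiber of size β or β + 1 and with R_T := {i : #T⁻¹({i}) = β + 1} of size r. Let Z⁽⁰⁾ : Fin n₀ → Fin K be arbitrary and define Z⁽¹⁾ : Fin n₁ → Fin K by Z⁽¹⁾(j) := Z⁽⁰⁾(T(j)). If for every k ∈ Fin K one has r · #{i : Z⁽⁰⁾(i) = k} = n₀ · #({i : Z⁽⁰⁾(i) = k} ∩ R_T), then Δ(Z) = 0. -/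

import Mathlib

/-- The group-fairness level Δ(Z) for two cluster assignments. -/
noncomputable def fairnessLevel {n₀ n₁ K : ℕ}
    (Z0 : Fin n₀ → Fin K) (Z1 : Fin n₁ → Fin K) : ℝ :=
  (1 / 2) * ∑ k : Fin K,
    |((Finset.univ.filter (fun i => Z0 i = k)).card : ℝ) / n₀
      - ((Finset.univ.filter (fun j => Z1 j = k)).card : ℝ) / n₁|

/-- **Proposition 4.** For n₁ = β·n₀ + r with 0 < r < n₀, if T : Fin n₁ → Fin n₀
is surjective with all fibers of size β or β+1 and exactly r fibers of size β+1
(the set R_T), Z⁽¹⁾ := Z⁽⁰⁾ ∘ T, and for every cluster k the proportion condition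
r · |C_k⁽⁰⁾| = n₀ · |C_k⁽⁰⁾ ∩ R_T| holds, then Z is perfectly fair: Δ(Z) = 0. -/
theorem sufficient_condition_perfect_fairness
    (n₀ n₁ β r K : ℕ) (hn₀ : 1 ≤ n₀) (hβ : 1 ≤ β) (hr : 0 < r) (hrn : r < n₀)
    (hn₁ : n₁ = β * n₀ + r) (hK : 1 ≤ K)
    (T : Fin n₁ → Fin n₀)
    (hsurj : Function.Surjective T)
    (hfiber : ∀ i : Fin n₀, (Finset.univ.filter (fun j => T j = i)).card = β ∨
      (Finset.univ.filter (fun j => T j = i)).card = β + 1)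
    (hRT : (Finset.univ.filter
      (fun i : Fin n₀ => (Finset.univ.filter (fun j => T j = i)).card = β + 1)).card = r)
    (Z0 : Fin n₀ → Fin K) (Z1 : Fin n₁ → Fin K)
    (hZ1 : ∀ j : Fin n₁, Z1 j = Z0 (T j))
    (hprop : ∀ k : Fin K,
      r * (Finset.univ.filter (fun i => Z0 i = k)).card =
        n₀ * ((Finset.univ.filter (fun i => Z0 i = k)) ∩
          (Finset.univ.filter
            (fun i : Fin n₀ => (Finset.univ.filter (fun j => T j = i)).card = β + 1))).card) :
    fairnessLevel Z0 Z1 = 0 := by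
  unfold fairnessLevel
  rw [mul_eq_zero]
  right
  apply Finset.sum_eq_zero
  intro k _
  rw [abs_eq_zero, sub_eq_zero]
  set C := Finset.univ.filter (fun i => Z0 i = k) with hC
  set R := Finset.univ.filter
      (fun i : Fin n₀ => (Finset.univ.filter (fun j => T j = i)).card = β + 1) with hR
  -- card of cluster k in Z1
  have hcard1 : (Finset.univ.filter (fun j => Z1 j = k)).card
      = β * C.card + (C ∩ R).card := by
    have h1 : (Finset.univ.filter (fun j => Z1 j = k)).card
        = ∑ i ∈ C, ((Finset.univ.filter (fun j => Z1 j = k)).filter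
            (fun j => T j = i)).card := by
      apply Finset.card_eq_sum_card_fiberwise
      intro j hj
      simp only [Finset.mem_coe, Finset.mem_filter, Finset.mem_univ, true_and] at hj ⊢
      rw [hZ1] at hj; simp [hC, hj]
    rw [h1]
    have h2 : ∀ i ∈ C, ((Finset.univ.filter (fun j => Z1 j = k)).filter
        (fun j => T j = i)).card = (Finset.univ.filter (fun j => T j = i)).card := by
      intro i hi
      congr 1
      ext j
      simp only [Finset.mem_filter, Finset.mem_univ, true_and, hZ1]
      constructor
      · rintro ⟨_, h⟩; exact h
      · rintro h
        refine ⟨?_, h⟩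
        rw [h]
        simpa [hC] using hi
    rw [Finset.sum_congr rfl h2]
    have h3 : ∀ i ∈ C, (Finset.univ.filter (fun j => T j = i)).card
        = β + (if i ∈ R then 1 else 0) := by
      intro i _
      rcases hfiber i with h | h
      · rw [if_neg, h, add_zero]
        simp only [hR, Finset.mem_filter, Finset.mem_univ, true_and, h]
        omega
      · rw [if_pos, h]
        simp only [hR, Finset.mem_filter, Finset.mem_univ, true_and, h]
    rw [Finset.sum_congr rfl h3, Finset.sum_add_distrib, Finset.sum_const,
      Finset.sum_ite_mem, Finset.sum_const]
    simp [mul_comm]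
  -- numeric conclusion
  have key : n₁ * C.card = n₀ * (β * C.card + (C ∩ R).card) := by
    have h := hprop k
    rw [hn₁, add_mul, h, mul_add]
    ring
  rw [hcard1]
  have hn₀' : (n₀ : ℝ) ≠ 0 := by positivity
  have hn₁' : (n₁ : ℝ) ≠ 0 := by
    have : 0 < n₁ := by omega
    positivity
  rw [div_eq_div_iff hn₀' hn₁']
  have h2 : (n₁:ℝ) * C.card = n₀ * (β * C.card + (C ∩ R).card) := by
    exact_mod_cast key
  push_cast
  linarith [h2]
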